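/- If u : ℤ × ℤ → ℝ satisfies the discrete KdV equation (u(k,l) - u(k+1,l+1))·(u(k+1,l) - u(k,l+1)) + β - α = 0 for all k,l, and all relevant differences are positive, then F(k,l) = -log(u(k,l+1) - u(k-1,l)) and G(k,l) = log(u(k+1,l) - u(k-1,l)) form a conservation law: G(k,l+1) - G(k,l) + F(k+1,l) - F(k,l) = 0 for all k,l. -/
import Mathlib

/-- the logarithmic conservation law for the discrete KdV equation. -/
theorem dKdV_basic_conservation_law (u : ℤ × ℤ → ℝ) (α β : ℝ)
    (hdkdv : ∀ k l : ℤ,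
      (u (k, l) - u (k + 1, l + 1)) * (u (k + 1, l) - u (k, l + 1)) + β - α = 0)
    (hpos1 : ∀ k l : ℤ, 0 < u (k, l + 1) - u (k - 1, l))
    (hpos2 : ∀ k l : ℤ, 0 < u (k + 1, l) - u (k - 1, l))
    (F G : ℤ × ℤ → ℝ)
    (hF : ∀ k l : ℤ, F (k, l) = -Real.log (u (k, l + 1) - u (k - 1, l)))
    (hG : ∀ k l : ℤ, G (k, l) = Real.log (u (k + 1, l) - u (k - 1, l))) :
    ∀ k l : ℤ, G (k, l + 1) - G (k, l) + (F (k + 1, l) - F (k, l)) = 0 := by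
  intro k l
  have e1 := hdkdv k l
  have e2 := hdkdv (k - 1) l
  have p1 := hpos1 (k + 1) l
  have p2 := hpos1 k l
  have p3 := hpos2 k (l + 1)
  have p4 := hpos2 k l
  simp only [sub_add_cancel] at e2 p1 p3
  rw [hG k (l + 1), hG k l, hF (k + 1) l, hF k l]
  simp only [add_sub_cancel_right] at p1 ⊢
  have key : (u (k + 1, l + 1) - u (k - 1, l + 1)) * (u (k, l + 1) - u (k - 1, l))
      = (u (k + 1, l) - u (k - 1, l)) * (u (k + 1, l + 1) - u (k, l)) := by
    nlinarith [e1, e2]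
  have h1 : Real.log ((u (k + 1, l + 1) - u (k - 1, l + 1)) * (u (k, l + 1) - u (k - 1, l)))
      = Real.log (u (k + 1, l + 1) - u (k - 1, l + 1)) + Real.log (u (k, l + 1) - u (k - 1, l)) :=
    Real.log_mul p3.ne' p2.ne'
  have h2 : Real.log ((u (k + 1, l) - u (k - 1, l)) * (u (k + 1, l + 1) - u (k, l)))
      = Real.log (u (k + 1, l) - u (k - 1, l)) + Real.log (u (k + 1, l + 1) - u (k, l)) :=
    Real.log_mul p4.ne' p1.ne'
  rw [key, h2] at h1
  linarith [h1]
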